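/- Let A and B be nonempty compact metric spaces and let c : A × B → ℝ be continuous. Then there exist μ* ∈ P(A) and ν* ∈ P(B) forming a saddle point of the mixed extension of c: for every μ ∈ P(A) and every ν ∈ P(B), ∫_A ∫_B c(a,b) ν*(db) μ(da) ≤ ∫_A ∫_B c(a,b) ν*(db) μ*(da) ≤ ∫_A ∫_B c(a,b) ν(db) μ*(da). -/

import Mathlib

open Set

section Komiya

variable {X Y : Type*} [TopologicalSpace X] [CompactSpace X]
  (f : X → Y → ℝ) (mx : ℝ → X → X → X) (my : ℝ → Y → Y → Y)

/-- A convex combination is at most the max of the two endpoints. -/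
private lemma comb_le_max {t a b : ℝ} (h0 : 0 ≤ t) (h1 : t ≤ 1) :
    (1 - t) * a + t * b ≤ max a b := by
  rcases le_total a b with h | h
  · calc (1-t)*a + t*b ≤ (1-t)*b + t*b := by nlinarith
    _ = b := by ring
    _ ≤ max a b := le_max_right a b
  · calc (1-t)*a + t*b ≤ (1-t)*a + t*a := by nlinarith
    _ = a := by ring
    _ ≤ max a b := le_max_left a b

private lemma comb_ge {t a b g : ℝ} (h0 : 0 ≤ t) (h1 : t ≤ 1) (ha : g ≤ a) (hb : g ≤ b) :
    g ≤ (1 - t) * a + t * b := by nlinarith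

/-- Komiya-style key lemma: two columns can be simultaneously defended. -/
theorem komiya_pair
    (hfx : ∀ y, Continuous fun x => f x y)
    (hmx : ∀ ⦃t⦄, 0 ≤ t → t ≤ 1 → ∀ x1 x2 y, f (mx t x1 x2) y = (1-t) * f x1 y + t * f x2 y)
    (hmy : ∀ ⦃t⦄, 0 ≤ t → t ≤ 1 → ∀ x y1 y2, f x (my t y1 y2) = (1-t) * f x y1 + t * f x y2)
    (K : Set X) (hKc : IsClosed K)
    (hKmix : ∀ ⦃t⦄, 0 ≤ t → t ≤ 1 → ∀ ⦃x1⦄, x1 ∈ K → ∀ ⦃x2⦄, x2 ∈ K → mx t x1 x2 ∈ K)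
    {α β : ℝ} (hαβ : α < β) (hβ : ∀ y, ∃ x ∈ K, β < f x y) (y1 y2 : Y) :
    ∃ x ∈ K, α ≤ f x y1 ∧ α ≤ f x y2 := by
  by_contra hcon
  push_neg at hcon
  -- hcon : ∀ x ∈ K, α ≤ f x y1 → f x y2 < α
  -- the two parts of the segment
  set I : Set ℝ := {t | (t ∈ Icc (0:ℝ) 1) ∧ ∃ x ∈ K, α ≤ f x y1 ∧ β ≤ (1-t) * f x y1 + t * f x y2}
    with hI
  set J : Set ℝ := {t | (t ∈ Icc (0:ℝ) 1) ∧ ∃ x ∈ K, α ≤ f x y2 ∧ β ≤ (1-t) * f x y1 + t * f x y2}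
    with hJ
  -- no x in K defends both columns
  have hnoboth : ∀ x ∈ K, ¬ (α ≤ f x y1 ∧ α ≤ f x y2) := by
    intro x hx ⟨h1, h2⟩
    exact absurd h2 (not_le.mpr (hcon x hx h1))
  -- the cover property
  have hcover : Icc (0:ℝ) 1 ⊆ I ∪ J := by
    rintro t ht
    obtain ⟨x, hxK, hxf⟩ := hβ (my t y1 y2)
    rw [hmy ht.1 ht.2] at hxf
    have hmax : α ≤ max (f x y1) (f x y2) :=
      le_of_lt (lt_of_lt_of_le hαβ (le_trans hxf.le (comb_le_max ht.1 ht.2)))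
    rcases le_max_iff.mp hmax with h | h
    · exact Or.inl ⟨ht, x, hxK, h, hxf.le⟩
    · exact Or.inr ⟨ht, x, hxK, h, hxf.le⟩
  -- disjointness
  have hdisj : ∀ t, t ∈ I → t ∈ J → False := by
    rintro t ⟨htI, x1', hx1K, hx1a, hx1b⟩ ⟨_, x2', hx2K, hx2a, hx2b⟩
    -- consider the segment from x1' to x2'
    set S1 : Set ℝ := {s | s ∈ Icc (0:ℝ) 1 ∧ α ≤ (1-s) * f x1' y1 + s * f x2' y1} with hS1
    set S2 : Set ℝ := {s | s ∈ Icc (0:ℝ) 1 ∧ α ≤ (1-s) * f x1' y2 + s * f x2' y2} with hS2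
    have hS1c : IsClosed S1 := by
      apply IsClosed.inter isClosed_Icc
      exact isClosed_le continuous_const
        (((continuous_const.sub continuous_id).mul continuous_const).add
          (continuous_id.mul continuous_const))
    have hS2c : IsClosed S2 := by
      apply IsClosed.inter isClosed_Icc
      exact isClosed_le continuous_const
        (((continuous_const.sub continuous_id).mul continuous_const).add
          (continuous_id.mul continuous_const))
    have hScover : Icc (0:ℝ) 1 ⊆ S1 ∪ S2 := by
      intro s hs
      have hxs : mx s x1' x2' ∈ K := hKmix hs.1 hs.2 hx1K hx2K
      have h1 : f (mx s x1' x2') y1 = (1-s) * f x1' y1 + s * f x2' y1 := hmx hs.1 hs.2 _ _ _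
      have h2 : f (mx s x1' x2') y2 = (1-s) * f x1' y2 + s * f x2' y2 := hmx hs.1 hs.2 _ _ _
      -- value against y_t is ≥ β
      have hyt : β ≤ (1-t) * f (mx s x1' x2') y1 + t * f (mx s x1' x2') y2 := by
        rw [h1, h2]
        have : β ≤ (1-s) * ((1-t) * f x1' y1 + t * f x1' y2)
            + s * ((1-t) * f x2' y1 + t * f x2' y2) := comb_ge hs.1 hs.2 hx1b hx2b
        nlinarith [this]
      have hmax : α ≤ max (f (mx s x1' x2') y1) (f (mx s x1' x2') y2) :=
        le_of_lt (lt_of_lt_of_le hαβ (hyt.trans (comb_le_max htI.1 htI.2)))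
      rcases le_max_iff.mp hmax with h | h
      · exact Or.inl ⟨hs, by rw [← h1]; exact h⟩
      · exact Or.inr ⟨hs, by rw [← h2]; exact h⟩
    have hSdisj : ∀ s, s ∈ S1 → s ∈ S2 → False := by
      rintro s ⟨hs, h1⟩ ⟨_, h2⟩
      have hxs : mx s x1' x2' ∈ K := hKmix hs.1 hs.2 hx1K hx2K
      exact hnoboth _ hxs ⟨by rw [hmx hs.1 hs.2]; exact h1, by rw [hmx hs.1 hs.2]; exact h2⟩
    -- 0 ∈ S1, 1 ∈ S2, and Icc 0 1 is preconnected: contradiction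
    have h0 : (0:ℝ) ∈ Icc (0:ℝ) 1 ∩ S1 := ⟨⟨le_refl 0, zero_le_one⟩, ⟨le_refl 0, zero_le_one⟩, by
      simpa using hx1a⟩
    have h1' : (1:ℝ) ∈ Icc (0:ℝ) 1 ∩ S2 := ⟨⟨zero_le_one, le_refl 1⟩, ⟨zero_le_one, le_refl 1⟩, by
      simpa using hx2a⟩
    obtain ⟨s, hs⟩ := (isPreconnected_closed_iff.mp isPreconnected_Icc) S1 S2 hS1c hS2c hScover
      ⟨0, h0⟩ ⟨1, h1'⟩
    exact hSdisj s hs.2.1 hs.2.2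
  -- I and J are closed (as projections of compact sets)
  have hIc : IsClosed I := by
    have : I = Prod.snd '' ({p : X × ℝ | p.1 ∈ K ∧ p.2 ∈ Icc (0:ℝ) 1 ∧ α ≤ f p.1 y1 ∧
        β ≤ (1 - p.2) * f p.1 y1 + p.2 * f p.1 y2}) := by
      ext t
      constructor
      · rintro ⟨ht, x, hxK, h1, h2⟩
        exact ⟨(x, t), ⟨hxK, ht, h1, h2⟩, rfl⟩
      · rintro ⟨⟨x, t'⟩, ⟨hxK, ht, h1, h2⟩, rfl⟩
        exact ⟨ht, x, hxK, h1, h2⟩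
    rw [this]
    apply IsCompact.isClosed
    apply IsCompact.image _ continuous_snd
    apply IsCompact.of_isClosed_subset (hKc.isCompact.prod isCompact_Icc)
    · apply IsClosed.inter (hKc.preimage continuous_fst)
      apply IsClosed.inter (isClosed_Icc.preimage continuous_snd)
      apply IsClosed.inter (isClosed_le continuous_const ((hfx y1).comp continuous_fst))
      exact isClosed_le continuous_const
        ((((continuous_const.sub continuous_snd).mul ((hfx y1).comp continuous_fst)).add
          (continuous_snd.mul ((hfx y2).comp continuous_fst))))
    · rintro ⟨x, t⟩ ⟨hxK, ht, _⟩
      exact ⟨hxK, ht⟩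
  have hJc : IsClosed J := by
    have : J = Prod.snd '' ({p : X × ℝ | p.1 ∈ K ∧ p.2 ∈ Icc (0:ℝ) 1 ∧ α ≤ f p.1 y2 ∧
        β ≤ (1 - p.2) * f p.1 y1 + p.2 * f p.1 y2}) := by
      ext t
      constructor
      · rintro ⟨ht, x, hxK, h1, h2⟩
        exact ⟨(x, t), ⟨hxK, ht, h1, h2⟩, rfl⟩
      · rintro ⟨⟨x, t'⟩, ⟨hxK, ht, h1, h2⟩, rfl⟩
        exact ⟨ht, x, hxK, h1, h2⟩
    rw [this]
    apply IsCompact.isClosed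
    apply IsCompact.image _ continuous_snd
    apply IsCompact.of_isClosed_subset (hKc.isCompact.prod isCompact_Icc)
    · apply IsClosed.inter (hKc.preimage continuous_fst)
      apply IsClosed.inter (isClosed_Icc.preimage continuous_snd)
      apply IsClosed.inter (isClosed_le continuous_const ((hfx y2).comp continuous_fst))
      exact isClosed_le continuous_const
        ((((continuous_const.sub continuous_snd).mul ((hfx y1).comp continuous_fst)).add
          (continuous_snd.mul ((hfx y2).comp continuous_fst))))
    · rintro ⟨x, t⟩ ⟨hxK, ht, _⟩
      exact ⟨hxK, ht⟩
  -- 0 ∈ I, 1 ∈ J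
  have h0I : (0:ℝ) ∈ Icc (0:ℝ) 1 ∩ I := by
    obtain ⟨x, hxK, hxf⟩ := hβ y1
    refine ⟨⟨le_refl 0, zero_le_one⟩, ⟨le_refl 0, zero_le_one⟩, x, hxK,
      le_of_lt (lt_trans hαβ hxf), by simpa using hxf.le⟩
  have h1J : (1:ℝ) ∈ Icc (0:ℝ) 1 ∩ J := by
    obtain ⟨x, hxK, hxf⟩ := hβ y2
    refine ⟨⟨zero_le_one, le_refl 1⟩, ⟨zero_le_one, le_refl 1⟩, x, hxK,
      le_of_lt (lt_trans hαβ hxf), by simpa using hxf.le⟩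
  obtain ⟨t, ht⟩ := (isPreconnected_closed_iff.mp isPreconnected_Icc) I J hIc hJc hcover
    ⟨0, h0I⟩ ⟨1, h1J⟩
  exact hdisj t ht.2.1 ht.2.2

end Komiya
section Komiya2

variable {X Y : Type*} [TopologicalSpace X] [CompactSpace X]
  (f : X → Y → ℝ) (mx : ℝ → X → X → X) (my : ℝ → Y → Y → Y)

/-- Finitely many columns can be simultaneously defended. -/
theorem komiya_finite [Nonempty Y]
    (hfx : ∀ y, Continuous fun x => f x y)
    (hmx : ∀ ⦃t⦄, 0 ≤ t → t ≤ 1 → ∀ x1 x2 y, f (mx t x1 x2) y = (1-t) * f x1 y + t * f x2 y)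
    (hmy : ∀ ⦃t⦄, 0 ≤ t → t ≤ 1 → ∀ x y1 y2, f x (my t y1 y2) = (1-t) * f x y1 + t * f x y2)
    (L : List Y) :
    ∀ (K : Set X), IsClosed K →
    (∀ ⦃t⦄, 0 ≤ t → t ≤ 1 → ∀ ⦃x1⦄, x1 ∈ K → ∀ ⦃x2⦄, x2 ∈ K → mx t x1 x2 ∈ K) →
    ∀ {α β : ℝ}, α < β → (∀ y, ∃ x ∈ K, β < f x y) →
    ∃ x ∈ K, ∀ y ∈ L, α ≤ f x y := by
  induction L with
  | nil =>
    intro K _ _ α β _ hβ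
    obtain ⟨x, hxK, _⟩ := hβ Classical.ofNonempty
    exact ⟨x, hxK, by simp⟩
  | cons y0 L ih =>
    intro K hKc hKmix α β hαβ hβ
    set γ : ℝ := (α + β) / 2 with hγ
    set δ : ℝ := (γ + β) / 2 with hδ
    have hαγ : α < γ := by rw [hγ]; linarith
    have hγδ : γ < δ := by rw [hδ, hγ]; linarith
    have hδβ : δ < β := by rw [hδ, hγ]; linarith
    set K' : Set X := K ∩ {x | γ ≤ f x y0} with hK'
    have hK'c : IsClosed K' := hKc.inter (isClosed_le continuous_const (hfx y0))
    have hK'mix : ∀ ⦃t⦄, 0 ≤ t → t ≤ 1 → ∀ ⦃x1⦄, x1 ∈ K' → ∀ ⦃x2⦄, x2 ∈ K' →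
        mx t x1 x2 ∈ K' := by
      rintro t ht0 ht1 x1 ⟨hx1K, hx1γ⟩ x2 ⟨hx2K, hx2γ⟩
      refine ⟨hKmix ht0 ht1 hx1K hx2K, ?_⟩
      show γ ≤ f (mx t x1 x2) y0
      rw [hmx ht0 ht1]
      exact comb_ge ht0 ht1 hx1γ hx2γ
    have hβ' : ∀ y, ∃ x ∈ K', γ < f x y := by
      intro y
      obtain ⟨x, hxK, h1, h2⟩ := komiya_pair f mx my hfx hmx hmy K hKc hKmix hδβ hβ y0 y
      exact ⟨x, ⟨hxK, le_trans hγδ.le h1⟩, lt_of_lt_of_le hγδ h2⟩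
    obtain ⟨x, hxK', hx⟩ := ih K' hK'c hK'mix hαγ hβ'
    refine ⟨x, hxK'.1, ?_⟩
    intro y hy
    rcases List.mem_cons.mp hy with rfl | hy
    · exact le_trans hαγ.le hxK'.2
    · exact hx y hy

/-- Abstract saddle point theorem à la von Neumann / Sion (Komiya's elementary method). -/
theorem komiya_saddle {X Y : Type*} [TopologicalSpace X] [TopologicalSpace Y]
    [CompactSpace X] [CompactSpace Y] [Nonempty X] [Nonempty Y]
    (f : X → Y → ℝ) (mx : ℝ → X → X → X) (my : ℝ → Y → Y → Y)
    (hfx : ∀ y, Continuous fun x => f x y)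
    (hfy : ∀ x, Continuous fun y => f x y)
    (hmx : ∀ ⦃t⦄, 0 ≤ t → t ≤ 1 → ∀ x1 x2 y, f (mx t x1 x2) y = (1-t) * f x1 y + t * f x2 y)
    (hmy : ∀ ⦃t⦄, 0 ≤ t → t ≤ 1 → ∀ x y1 y2, f x (my t y1 y2) = (1-t) * f x y1 + t * f x y2) :
    ∃ xs ys, ∀ x y, f x ys ≤ f xs ys ∧ f xs ys ≤ f xs y := by
  classical
  set g : Y → ℝ := fun y => ⨆ x, f x y with hg
  have hbdd : ∀ y, BddAbove (Set.range fun x => f x y) := fun y =>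
    (isCompact_range (hfx y)).bddAbove
  have hfg : ∀ x y, f x y ≤ g y := fun x y => le_ciSup (hbdd y) x
  have hlt : ∀ {r : ℝ} {y}, r < g y → ∃ x, r < f x y := fun {r y} h =>
    exists_lt_of_lt_ciSup h
  -- sublevel sets of g are closed
  have hgclosed : ∀ r : ℝ, IsClosed {y | g y ≤ r} := by
    intro r
    rw [← isOpen_compl_iff]
    rw [isOpen_iff_mem_nhds]
    intro y hy
    obtain ⟨x, hx⟩ := hlt (not_le.mp hy)
    apply Filter.mem_of_superset (((hfy x).isOpen_preimage _ isOpen_Ioi).mem_nhds hx)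
    intro y' hy'
    exact not_le.mpr (lt_of_lt_of_le hy' (hfg x y'))
  -- a minimizer of g
  have hys : ∃ ys, ∀ y, g ys ≤ g y := by
    by_contra hcon
    push_neg at hcon
    have hempty : (Set.univ : Set Y) ∩ ⋂ (y : Y), {y' | g y' ≤ g y} = ∅ := by
      rw [Set.eq_empty_iff_forall_notMem]
      rintro y' ⟨_, hy'⟩
      obtain ⟨y, hy⟩ := hcon y'
      exact absurd (Set.mem_iInter.mp hy' y) (not_le.mpr hy)
    obtain ⟨u, hu⟩ := isCompact_univ.elim_finite_subfamily_closed _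
      (fun y => hgclosed (g y)) hempty
    rcases u.eq_empty_or_nonempty with rfl | hne
    · simp at hu
    · obtain ⟨y0, hy0u, hy0⟩ := u.exists_min_image g hne
      apply Set.eq_empty_iff_forall_notMem.mp hu y0
      exact ⟨trivial, Set.mem_iInter₂.mpr fun y hy => hy0 y hy⟩
  obtain ⟨ys, hys⟩ := hys
  set v : ℝ := g ys with hv
  -- a maximinimizer x*
  have hxs : ∃ xs, ∀ y, v ≤ f xs y := by
    by_contra hcon
    push_neg at hcon
    have hempty : (Set.univ : Set X) ∩
        ⋂ (p : Y × ℕ), {x | v - 1/(p.2+1) ≤ f x p.1} = ∅ := by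
      rw [Set.eq_empty_iff_forall_notMem]
      rintro x ⟨_, hx⟩
      obtain ⟨y, hy⟩ := hcon x
      obtain ⟨n, hn⟩ := exists_nat_one_div_lt (sub_pos.mpr hy)
      have := Set.mem_iInter.mp hx (y, n)
      simp only [Set.mem_setOf_eq] at this
      have : v - 1/(n+1) ≤ f x y := by exact_mod_cast this
      linarith
    obtain ⟨u, hu⟩ := isCompact_univ.elim_finite_subfamily_closed
      (fun p : Y × ℕ => {x | v - 1/(p.2+1) ≤ f x p.1})
      (fun p => isClosed_le continuous_const (hfx p.1)) hempty
    -- choose α greater than all thresholds but < v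
    have hex : ∃ x, ∀ p ∈ u, v - 1/(p.2+1) ≤ f x p.1 := by
      obtain ⟨N, hN⟩ : ∃ N : ℕ, ∀ p ∈ u, p.2 ≤ N :=
        ⟨u.sup Prod.snd, fun p hp => Finset.le_sup (f := Prod.snd) hp⟩
      have hεpos : (0:ℝ) < 1/(N+1) := by positivity
      set α : ℝ := v - 1/(N+1) with hα
      set β : ℝ := v - 1/(N+1)/2 with hβdef
      have hαβ : α < β := by rw [hα, hβdef]; linarith
      have hβv : β < v := by rw [hβdef]; linarith
      have hβ : ∀ y, ∃ x ∈ (Set.univ : Set X), β < f x y := by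
        intro y
        obtain ⟨x, hx⟩ := hlt (lt_of_lt_of_le hβv (hys y))
        exact ⟨x, trivial, hx⟩
      obtain ⟨x, _, hx⟩ := komiya_finite f mx my hfx hmx hmy
        (u.toList.map Prod.fst) Set.univ isClosed_univ (fun _ _ _ _ _ _ _ => trivial) hαβ hβ
      refine ⟨x, fun p hp => ?_⟩
      have h1 : α ≤ f x p.1 := hx p.1 (List.mem_map.mpr ⟨p, Finset.mem_toList.mpr hp, rfl⟩)
      have h2 : (1:ℝ)/(N+1) ≤ 1/(p.2+1) := by
        apply one_div_le_one_div_of_le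
        · positivity
        · have := hN p hp
          exact_mod_cast by exact_mod_cast add_le_add_left (Nat.cast_le.mpr this) 1
      calc v - 1/(p.2+1) ≤ v - 1/(N+1) := by linarith
      _ ≤ f x p.1 := h1
    obtain ⟨x, hx⟩ := hex
    apply Set.eq_empty_iff_forall_notMem.mp hu x
    exact ⟨trivial, Set.mem_iInter₂.mpr fun p hp => hx p hp⟩
  obtain ⟨xs, hxs⟩ := hxs
  refine ⟨xs, ys, fun x y => ⟨?_, ?_⟩⟩
  · exact le_trans (hfg x ys) (hxs ys)
  · exact le_trans (le_trans (hfg xs ys) (le_refl v)) (hxs y)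

end Komiya2
set_option linter.unusedSectionVars false

open Set MeasureTheory TopologicalSpace

section RMK

variable {A : Type*} [MetricSpace A] [CompactSpace A]
variable (Λ : C(A, ℝ) → ℝ)

/-- Competitor functions for the Riesz content of a set `K`. -/
def rmkSet (K : Set A) : Set C(A, ℝ) := {h | (∀ x, 0 ≤ h x) ∧ ∀ x ∈ K, 1 ≤ h x}

/-- The Riesz content (as a real number) of a set `K`. -/
noncomputable def rcl (K : Set A) : ℝ := sInf (Λ '' rmkSet K)

lemma one_mem_rmkSet (K : Set A) : (1 : C(A, ℝ)) ∈ rmkSet K :=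
  ⟨fun x => by simp, fun x _ => by simp⟩

lemma rmkSet_nonempty (K : Set A) : (Λ '' rmkSet K).Nonempty :=
  ⟨Λ 1, 1, one_mem_rmkSet K, rfl⟩

variable (hadd : ∀ f g, Λ (f + g) = Λ f + Λ g)
  (hpos : ∀ f : C(A, ℝ), (∀ x, 0 ≤ f x) → 0 ≤ Λ f)

section basic
include hadd hpos

lemma lam_mono {f g : C(A, ℝ)} (h : ∀ x, f x ≤ g x) : Λ f ≤ Λ g := by
  have h1 : f + (g - f) = g := by ext x; simp
  have h2 : Λ g = Λ f + Λ (g - f) := by rw [← h1, hadd]; rw [h1]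
  have h3 : 0 ≤ Λ (g - f) := hpos _ (fun x => by simpa using sub_nonneg.mpr (h x))
  linarith

include hadd hpos in
lemma rmk_bddBelow (K : Set A) : BddBelow (Λ '' rmkSet K) := by
  refine ⟨0, ?_⟩
  rintro b ⟨h, hh, rfl⟩
  exact hpos h hh.1

lemma rcl_nonneg (K : Set A) : 0 ≤ rcl Λ K :=
  le_csInf (rmkSet_nonempty Λ K) (by rintro b ⟨h, hh, rfl⟩; exact hpos h hh.1)

lemma rcl_le {K : Set A} {h : C(A, ℝ)} (hh : h ∈ rmkSet K) : rcl Λ K ≤ Λ h :=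
  csInf_le (rmk_bddBelow Λ hadd hpos K) ⟨h, hh, rfl⟩

lemma exists_rcl_lt {K : Set A} {ε : ℝ} (hε : 0 < ε) :
    ∃ h ∈ rmkSet K, Λ h < rcl Λ K + ε := by
  obtain ⟨b, ⟨h, hh, rfl⟩, hb⟩ := exists_lt_of_csInf_lt (rmkSet_nonempty Λ K)
    (lt_add_of_pos_right (rcl Λ K) hε)
  exact ⟨h, hh, hb⟩

lemma rcl_mono {K1 K2 : Set A} (h : K1 ⊆ K2) : rcl Λ K1 ≤ rcl Λ K2 := by
  apply csInf_le_csInf (rmk_bddBelow Λ hadd hpos K1) (rmkSet_nonempty Λ K2)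
  apply image_mono
  rintro g ⟨hg0, hg1⟩
  exact ⟨hg0, fun x hx => hg1 x (h hx)⟩

/-- If `0 ≤ h ≤ 1` and `tsupport h ⊆ K` then `Λ h ≤ rcl K`. -/
lemma lam_le_rcl {K : Set A} {h : C(A, ℝ)} (h0 : ∀ x, 0 ≤ h x) (h1 : ∀ x, h x ≤ 1)
    (hsupp : tsupport h ⊆ K) : Λ h ≤ rcl Λ K := by
  apply le_csInf (rmkSet_nonempty Λ K)
  rintro b ⟨g, ⟨hg0, hg1⟩, rfl⟩
  apply lam_mono Λ hadd hpos
  intro x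
  by_cases hx : x ∈ tsupport h
  · exact le_trans (h1 x) (hg1 x (hsupp hx))
  · rw [image_eq_zero_of_notMem_tsupport hx]
    exact hg0 x

lemma rcl_union_le (K1 K2 : Set A) : rcl Λ (K1 ∪ K2) ≤ rcl Λ K1 + rcl Λ K2 := by
  apply le_of_forall_pos_le_add
  intro ε hε
  obtain ⟨h1, hh1, hb1⟩ := exists_rcl_lt Λ hadd hpos (K := K1) (half_pos hε)
  obtain ⟨h2, hh2, hb2⟩ := exists_rcl_lt Λ hadd hpos (K := K2) (half_pos hε)
  have hmem : h1 + h2 ∈ rmkSet (K1 ∪ K2) := by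
    constructor
    · intro x; simpa using add_nonneg (hh1.1 x) (hh2.1 x)
    · rintro x (hx | hx)
      · simpa using le_add_of_le_of_nonneg (hh1.2 x hx) (hh2.1 x)
      · simpa using le_add_of_nonneg_of_le (hh1.1 x) (hh2.2 x hx)
  calc rcl Λ (K1 ∪ K2) ≤ Λ (h1 + h2) := rcl_le Λ hadd hpos hmem
  _ = Λ h1 + Λ h2 := hadd h1 h2
  _ ≤ rcl Λ K1 + rcl Λ K2 + ε := by linarith

lemma rcl_union_disjoint {K1 K2 : Set A} (hd : Disjoint K1 K2)
    (hc1 : IsClosed K1) (hc2 : IsClosed K2) :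
    rcl Λ (K1 ∪ K2) = rcl Λ K1 + rcl Λ K2 := by
  refine le_antisymm (rcl_union_le Λ hadd hpos K1 K2) ?_
  obtain ⟨g, hg0, hg1, hg01⟩ := exists_continuous_zero_one_of_isClosed hc2 hc1 hd.symm
  apply le_csInf (rmkSet_nonempty Λ _)
  rintro b ⟨h, ⟨hh0, hh1⟩, rfl⟩
  have hmem1 : h * g ∈ rmkSet K1 := by
    constructor
    · intro x; exact mul_nonneg (hh0 x) (hg01 x).1
    · intro x hx
      have : g x = 1 := hg1 hx
      simpa [this] using hh1 x (Or.inl hx)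
  have hmem2 : h * (1 - g) ∈ rmkSet K2 := by
    constructor
    · intro x
      simpa using mul_nonneg (hh0 x) (by simpa using sub_nonneg.mpr (hg01 x).2)
    · intro x hx
      have : g x = 0 := hg0 hx
      simpa [this] using hh1 x (Or.inr hx)
  have hsum : h * g + h * (1 - g) = h := by ext x; simp; ring
  calc rcl Λ K1 + rcl Λ K2 ≤ Λ (h * g) + Λ (h * (1 - g)) :=
        add_le_add (rcl_le Λ hadd hpos hmem1) (rcl_le Λ hadd hpos hmem2)
  _ = Λ (h * g + h * (1 - g)) := (hadd _ _).symm
  _ = Λ h := by rw [hsum]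

end basic

/-- The Riesz content associated to a positive additive functional. -/
noncomputable def rieszCont (hadd : ∀ f g, Λ (f + g) = Λ f + Λ g)
    (hpos : ∀ f : C(A, ℝ), (∀ x, 0 ≤ f x) → 0 ≤ Λ f) : Content A where
  toFun K := Real.toNNReal (rcl Λ K.1)
  mono' K1 K2 h := Real.toNNReal_le_toNNReal (rcl_mono Λ hadd hpos h)
  sup_disjoint' K1 K2 hd h1 h2 := by
    have : rcl Λ ((K1 : Set A) ∪ K2) = rcl Λ K1 + rcl Λ K2 :=
      rcl_union_disjoint Λ hadd hpos hd h1 h2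
    have hcoe : ((K1 ⊔ K2 : Compacts A) : Set A) = (K1 : Set A) ∪ K2 := rfl
    show Real.toNNReal (rcl Λ ((K1 ⊔ K2 : Compacts A) : Set A)) = _
    rw [hcoe, this, Real.toNNReal_add (rcl_nonneg Λ hadd hpos _) (rcl_nonneg Λ hadd hpos _)]
    rfl
  sup_le' K1 K2 := by
    have hcoe : ((K1 ⊔ K2 : Compacts A) : Set A) = (K1 : Set A) ∪ K2 := rfl
    show Real.toNNReal (rcl Λ ((K1 ⊔ K2 : Compacts A) : Set A)) ≤ _
    rw [hcoe]
    calc Real.toNNReal (rcl Λ ((K1 : Set A) ∪ K2))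
        ≤ Real.toNNReal (rcl Λ K1 + rcl Λ K2) :=
          Real.toNNReal_le_toNNReal (rcl_union_le Λ hadd hpos K1 K2)
    _ = Real.toNNReal (rcl Λ K1) + Real.toNNReal (rcl Λ K2) :=
          Real.toNNReal_add (rcl_nonneg Λ hadd hpos _) (rcl_nonneg Λ hadd hpos _)

end RMK
section RMK2

open Set MeasureTheory TopologicalSpace Filter
open scoped ENNReal NNReal

variable {A : Type*} [MetricSpace A] [CompactSpace A]
variable (Λ : C(A, ℝ) → ℝ)
variable (hadd : ∀ f g, Λ (f + g) = Λ f + Λ g)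
  (hpos : ∀ f : C(A, ℝ), (∀ x, 0 ≤ f x) → 0 ≤ Λ f)
  (hsmul : ∀ (r : ℝ) (f : C(A, ℝ)), Λ (r • f) = r * Λ f)

include hadd hpos in
lemma rcl_univ (hone : Λ 1 = 1) : rcl Λ (univ : Set A) = 1 := by
  refine le_antisymm ?_ ?_
  · have := rcl_le Λ hadd hpos (one_mem_rmkSet univ)
    rwa [hone] at this
  · apply le_csInf (rmkSet_nonempty Λ univ)
    rintro b ⟨h, ⟨hh0, hh1⟩, rfl⟩
    have := lam_mono Λ hadd hpos (f := 1) (g := h) (fun x => by simpa using hh1 x trivial)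
    rwa [hone] at this

include hadd hpos hsmul in
lemma rieszCont_regular : (rieszCont Λ hadd hpos).ContentRegular := by
  intro K
  refine le_antisymm (le_iInf fun K' => le_iInf fun hK' => ?_) ?_
  · exact (rieszCont Λ hadd hpos).mono K K' (hK'.trans interior_subset)
  · apply ENNReal.le_of_forall_pos_le_add
    intro ε hε _
    set R : ℝ := rcl Λ K.1 with hR
    have hR0 : 0 ≤ R := rcl_nonneg Λ hadd hpos _
    have hε' : (0:ℝ) < ε := hε
    set δ : ℝ := min (1/2) ((ε : ℝ) / (2 * (R + ε))) with hδdef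
    have hRε : (0:ℝ) < R + ε := by linarith
    have hδpos : 0 < δ := lt_min (by norm_num) (by positivity)
    have hδhalf : δ ≤ 1/2 := min_le_left _ _
    have hδsmall : δ * (R + ε) ≤ (ε : ℝ) / 2 := by
      have h1 : δ ≤ (ε : ℝ) / (2 * (R + ε)) := min_le_right _ _
      calc δ * (R + ε) ≤ (ε : ℝ) / (2 * (R + ε)) * (R + ε) := by nlinarith
      _ = (ε : ℝ) / 2 := by field_simp
    have hδlt1 : δ < 1 := lt_of_le_of_lt hδhalf (by norm_num)
    have h1δ : (0:ℝ) < 1 - δ := by linarith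
    obtain ⟨h, ⟨hh0, hh1⟩, hΛh⟩ := exists_rcl_lt Λ hadd hpos (K := K.1) (half_pos hε')
    set K' : Compacts A := ⟨{x | 1 - δ ≤ h x}, (isClosed_le continuous_const h.continuous).isCompact⟩
      with hK'def
    have hKint : (K : Set A) ⊆ interior (K' : Set A) := by
      have hopen : IsOpen {x | 1 - δ < h x} := isOpen_lt continuous_const h.continuous
      have hsub1 : (K : Set A) ⊆ {x | 1 - δ < h x} := fun x hx =>
        lt_of_lt_of_le (by linarith) (hh1 x hx)
      have hsub2 : {x | 1 - δ < h x} ⊆ (K' : Set A) := fun x hx => show (1:ℝ) - δ ≤ h x from le_of_lt hx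
      exact hsub1.trans (interior_maximal hsub2 hopen)
    have hcomp : (1 - δ)⁻¹ • h ∈ rmkSet (K' : Set A) := by
      constructor
      · intro x
        simpa using mul_nonneg (by positivity) (hh0 x)
      · intro x hx
        have hx' : (1:ℝ) - δ ≤ h x := hx
        have hkey : (1:ℝ) ≤ (1 - δ)⁻¹ * h x := by
          calc (1:ℝ) = (1 - δ)⁻¹ * (1 - δ) := by field_simp
          _ ≤ (1 - δ)⁻¹ * h x := mul_le_mul_of_nonneg_left hx' (by positivity)
        simpa using hkey
    have hrclK' : rcl Λ (K' : Set A) ≤ R + (ε : ℝ) := by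
      calc rcl Λ (K' : Set A) ≤ Λ ((1 - δ)⁻¹ • h) := rcl_le Λ hadd hpos hcomp
      _ = (1 - δ)⁻¹ * Λ h := hsmul _ _
      _ ≤ (1 - δ)⁻¹ * (R + (ε : ℝ)/2) := by
          apply mul_le_mul_of_nonneg_left (by linarith) (by positivity)
      _ ≤ R + (ε : ℝ) := by
          rw [inv_mul_le_iff₀ h1δ]
          nlinarith
    calc ⨅ (K' : Compacts A) (_ : (K : Set A) ⊆ interior (K' : Set A)),
          (rieszCont Λ hadd hpos) K'
        ≤ (rieszCont Λ hadd hpos) K' := biInf_le _ hKint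
    _ = ((rcl Λ (K' : Set A)).toNNReal : ℝ≥0∞) := rfl
    _ ≤ ((R + (ε:ℝ)).toNNReal : ℝ≥0∞) := by
        exact_mod_cast Real.toNNReal_le_toNNReal hrclK'
    _ = ((R.toNNReal : ℝ≥0∞) + (ε : ℝ≥0∞)) := by
        rw [Real.toNNReal_add hR0 (le_of_lt hε')]
        push_cast
        congr 1
        simp
    _ = (rieszCont Λ hadd hpos) K + ε := rfl

variable [MeasurableSpace A] [BorelSpace A]

/-- The Riesz measure associated to the functional `Λ`. -/
noncomputable def rieszMeas : Measure A := (rieszCont Λ hadd hpos).measure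

include hsmul in
lemma rieszMeas_compact {K : Set A} (hK : IsCompact K) :
    rieszMeas Λ hadd hpos K = ENNReal.ofReal (rcl Λ K) := by
  have := (rieszCont Λ hadd hpos).measure_eq_content_of_regular
    (rieszCont_regular Λ hadd hpos hsmul) ⟨K, hK⟩
  exact this

include hsmul in
lemma rieszMeas_univ (hone : Λ 1 = 1) : rieszMeas Λ hadd hpos univ = 1 := by
  rw [rieszMeas_compact Λ hadd hpos hsmul isCompact_univ, rcl_univ Λ hadd hpos hone]
  simp

end RMK2
section RMK3

open Set MeasureTheory TopologicalSpace Filter Finset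
open scoped ENNReal NNReal

/-- Layer decomposition identity. -/
lemma layer_sum_eq {ε : ℝ} (hε : 0 ≤ ε) {v : ℝ} (hv : 0 ≤ v) (n : ℕ) :
    ∑ i ∈ Finset.range n, min (max (v - i*ε) 0) ε = min v (n*ε) := by
  induction n with
  | zero => simpa using (min_eq_right hv).symm
  | succ n ih =>
    rw [Finset.sum_range_succ, ih]
    push_cast
    rcases le_total v (n*ε) with h | h
    · rw [max_eq_right (by linarith), min_eq_left hε, min_eq_left h,
        min_eq_left (by nlinarith)]
      ring
    · rw [max_eq_left (by linarith), min_eq_right h]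
      rcases le_total v ((n+1)*ε) with h2 | h2
      · rw [min_eq_left (by nlinarith), min_eq_left h2]
        ring
      · rw [min_eq_right (by nlinarith), min_eq_right h2]
        ring

lemma ifsum_le_min {ε : ℝ} (hε : 0 ≤ ε) {v : ℝ} (hv : 0 ≤ v) (n : ℕ) :
    ∑ i ∈ Finset.range n, (if ((i:ℝ)+1)*ε ≤ v then ε else 0) ≤ min v (n*ε) := by
  induction n with
  | zero => simpa using le_min hv (le_refl 0)
  | succ n ih =>
    rw [Finset.sum_range_succ]
    push_cast
    split_ifs with h
    · have hn : (n:ℝ)*ε ≤ v := by nlinarith [Nat.cast_nonneg (α := ℝ) n]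
      have hmin : min v ((n:ℝ)*ε) = (n:ℝ)*ε := min_eq_right hn
      rw [hmin] at ih
      apply le_min (by linarith) (by nlinarith)
    · rw [add_zero]
      exact le_trans ih (min_le_min (le_refl v) (by nlinarith))

lemma min_le_ifsum {ε : ℝ} (hε : 0 ≤ ε) {v : ℝ} (hv : 0 ≤ v) (n : ℕ) :
    min v (n*ε) ≤ ∑ i ∈ Finset.range n, (if (i:ℝ)*ε ≤ v then ε else 0) := by
  induction n with
  | zero => simpa using min_le_right v 0
  | succ n ih =>
    rw [Finset.sum_range_succ]
    push_cast
    split_ifs with h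
    · rcases le_total v ((n:ℝ)*ε) with h2 | h2
      · calc min v (((n:ℝ)+1)*ε) ≤ v := min_le_left _ _
        _ = min v ((n:ℝ)*ε) + 0 := by rw [min_eq_left h2]; ring
        _ ≤ _ := by gcongr
      · calc min v (((n:ℝ)+1)*ε) ≤ ((n:ℝ)+1)*ε := min_le_right _ _
        _ = min v ((n:ℝ)*ε) + ε := by rw [min_eq_right h2]; ring
        _ ≤ _ := by gcongr
    · push_neg at h
      have hvn : min v (((n:ℝ)+1)*ε) = v := min_eq_left (by nlinarith)
      have hvn2 : min v ((n:ℝ)*ε) = v := min_eq_left (by nlinarith)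
      rw [hvn]
      rw [hvn2] at ih
      linarith

variable {A : Type*} [MetricSpace A] [CompactSpace A] [Nonempty A]
variable (Λ : C(A, ℝ) → ℝ)
variable (hadd : ∀ f g, Λ (f + g) = Λ f + Λ g)
  (hpos : ∀ f : C(A, ℝ), (∀ x, 0 ≤ f x) → 0 ≤ Λ f)
  (hsmul : ∀ (r : ℝ) (f : C(A, ℝ)), Λ (r • f) = r * Λ f)

include hsmul in
lemma lam_zero : Λ 0 = 0 := by
  have := hsmul 0 0
  simpa using this

include hadd hsmul in
lemma lam_finsum {ι : Type*} (s : Finset ι) (F : ι → C(A, ℝ)) :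
    Λ (∑ i ∈ s, F i) = ∑ i ∈ s, Λ (F i) := by
  classical
  induction s using Finset.induction with
  | empty => simpa using lam_zero Λ hsmul
  | insert x s hx ih =>
    rw [Finset.sum_insert hx, Finset.sum_insert hx, hadd, ih]

variable [MeasurableSpace A] [BorelSpace A]

lemma contMap_integrable (μ : Measure A) [IsFiniteMeasure μ] (g : C(A, ℝ)) :
    Integrable g μ :=
  g.continuous.integrable_of_hasCompactSupport (isClosed_tsupport _).isCompact

include hadd hpos hsmul in
/-- Riesz representation, for nonnegative functions. -/
lemma integral_rieszMeas_nonneg (hone : Λ 1 = 1) (g : C(A, ℝ)) (hg0 : ∀ x, 0 ≤ g x) :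
    ∫ x, g x ∂(rieszMeas Λ hadd hpos) = Λ g := by
  classical
  set μ : Measure A := rieszMeas Λ hadd hpos with hμ
  haveI : IsProbabilityMeasure μ := ⟨rieszMeas_univ Λ hadd hpos hsmul hone⟩
  obtain ⟨M0, hM0⟩ := (isCompact_range g.continuous).bddAbove
  set M : ℝ := M0 + 1 with hMdef
  have hM : ∀ x, g x < M := fun x => by
    have h := hM0 (Set.mem_range_self (f := fun x => g x) x)
    rw [hMdef]
    linarith
  have hMpos : 0 < M := lt_of_le_of_lt (hg0 Classical.ofNonempty) (hM Classical.ofNonempty)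
  have key : ∀ n : ℕ, 0 < n → |(∫ x, g x ∂μ) - Λ g| ≤ M / n := by
    intro n hn
    have hnR : (0:ℝ) < n := by exact_mod_cast hn
    set ε : ℝ := M / n with hεdef
    have hεpos : 0 < ε := div_pos hMpos hnR
    have hnε : (n:ℝ) * ε = M := by rw [hεdef]; field_simp
    set KK : ℝ → Set A := fun t => {x | t ≤ g x} with hKK
    have hKKclosed : ∀ t, IsClosed (KK t) := fun t => isClosed_le continuous_const g.continuous
    set m : ℝ → ℝ := fun t => rcl Λ (KK t) with hm
    have hKKmeas : ∀ t, (μ (KK t)).toReal = m t := by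
      intro t
      rw [hμ, rieszMeas_compact Λ hadd hpos hsmul (hKKclosed t).isCompact,
        ENNReal.toReal_ofReal (rcl_nonneg Λ hadd hpos _)]
    have hm_nonneg : ∀ t, 0 ≤ m t := fun t => rcl_nonneg Λ hadd hpos _
    have hm_le_one : ∀ t, m t ≤ 1 := by
      intro t
      calc m t ≤ rcl Λ univ := rcl_mono Λ hadd hpos (subset_univ _)
      _ = 1 := rcl_univ Λ hadd hpos hone
    -- layer functions
    set G : ℕ → C(A, ℝ) := fun i =>
      ⟨fun x => min (max (g x - i*ε) 0) ε,
        (Continuous.max (g.continuous.sub continuous_const) continuous_const).min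
          continuous_const⟩ with hGdef
    have hG_apply : ∀ (i : ℕ) (x : A), G i x = min (max (g x - i*ε) 0) ε := fun i x => rfl
    have hG0 : ∀ (i : ℕ) (x : A), 0 ≤ G i x := fun i x => le_min (le_max_right _ _) hεpos.le
    have hGε : ∀ (i : ℕ) (x : A), G i x ≤ ε := fun i x => min_le_right _ _
    have hGsum : (∑ i ∈ Finset.range n, G i) = g := by
      ext x
      rw [ContinuousMap.coe_sum, Finset.sum_apply]
      simp only [hG_apply]
      rw [layer_sum_eq hεpos.le (hg0 x) n, hnε, min_eq_left (hM x).le]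
    -- Λ bounds for the layers
    have hlower : ∀ i : ℕ, ε * m (((i:ℝ)+1)*ε) ≤ Λ (G i) := by
      intro i
      have hcomp : ε⁻¹ • G i ∈ rmkSet (KK (((i:ℝ)+1)*ε)) := by
        constructor
        · intro x
          simpa using mul_nonneg (by positivity) (hG0 i x)
        · intro x hx
          have hx' : ((i:ℝ)+1)*ε ≤ g x := hx
          have hval : G i x = ε := by
            rw [hG_apply, max_eq_left (by nlinarith), min_eq_right (by nlinarith)]
          have : (ε⁻¹ • G i) x = ε⁻¹ * ε := by simp [hval]
          rw [this, inv_mul_cancel₀ hεpos.ne']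
      have h1 : rcl Λ (KK (((i:ℝ)+1)*ε)) ≤ Λ (ε⁻¹ • G i) := rcl_le Λ hadd hpos hcomp
      rw [hsmul] at h1
      calc ε * m (((i:ℝ)+1)*ε) ≤ ε * (ε⁻¹ * Λ (G i)) :=
            mul_le_mul_of_nonneg_left h1 hεpos.le
      _ = Λ (G i) := by field_simp
    have hupper : ∀ i : ℕ, Λ (G i) ≤ ε * m ((i:ℝ)*ε) := by
      intro i
      have hsupp : tsupport ⇑(ε⁻¹ • G i) ⊆ KK ((i:ℝ)*ε) := by
        apply closure_minimal ?_ (hKKclosed _)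
        intro x hx
        by_contra hxK
        apply hx
        have hgx : g x < (i:ℝ)*ε := not_le.mp hxK
        have hval : G i x = 0 := by
          rw [hG_apply, max_eq_right (by nlinarith), min_eq_left hεpos.le]
        show (ε⁻¹ • G i) x = 0
        simp [hval]
      have h01 : ∀ x, 0 ≤ (ε⁻¹ • G i) x := fun x => by
        simpa using mul_nonneg (by positivity) (hG0 i x)
      have hle1 : ∀ x, (ε⁻¹ • G i) x ≤ 1 := fun x => by
        have : ε⁻¹ * G i x ≤ ε⁻¹ * ε := mul_le_mul_of_nonneg_left (hGε i x) (by positivity)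
        rw [inv_mul_cancel₀ hεpos.ne'] at this
        simpa using this
      have h2 := lam_le_rcl Λ hadd hpos h01 hle1 hsupp
      rw [hsmul] at h2
      calc Λ (G i) = ε * (ε⁻¹ * Λ (G i)) := by field_simp
      _ ≤ ε * m ((i:ℝ)*ε) := mul_le_mul_of_nonneg_left h2 hεpos.le
    have hΛg : Λ g = ∑ i ∈ Finset.range n, Λ (G i) := by
      rw [← hGsum, lam_finsum Λ hadd hsmul]
    have hΛ_up : Λ g ≤ ∑ i ∈ Finset.range n, ε * m ((i:ℝ)*ε) := by
      rw [hΛg]; exact Finset.sum_le_sum (fun i _ => hupper i)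
    have hΛ_lo : ∑ i ∈ Finset.range n, ε * m (((i:ℝ)+1)*ε) ≤ Λ g := by
      rw [hΛg]; exact Finset.sum_le_sum (fun i _ => hlower i)
    -- integral bounds
    have hint_ind : ∀ t : ℝ, Integrable ((KK t).indicator (fun _ => ε)) μ :=
      fun t => (integrable_const ε).indicator (hKKclosed t).measurableSet
    have hind_int : ∀ t : ℝ, ∫ x, (KK t).indicator (fun _ => ε) x ∂μ = ε * m t := by
      intro t
      rw [MeasureTheory.integral_indicator_const ε (hKKclosed t).measurableSet, measureReal_def, hKKmeas t,
        smul_eq_mul, mul_comm]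
    have hg_int : Integrable (fun x => g x) μ := contMap_integrable μ g
    have hind_eq : ∀ (t : ℝ) (x : A),
        (KK t).indicator (fun _ => ε) x = if t ≤ g x then ε else 0 := by
      intro t x
      rw [Set.indicator_apply]
      rfl
    have hInt_up : ∫ x, g x ∂μ ≤ ∑ i ∈ Finset.range n, ε * m ((i:ℝ)*ε) := by
      have hpt : ∀ x, g x ≤ ∑ i ∈ Finset.range n, (KK ((i:ℝ)*ε)).indicator (fun _ => ε) x := by
        intro x
        have h1 := min_le_ifsum hεpos.le (hg0 x) n
        rw [hnε, min_eq_left (hM x).le] at h1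
        calc g x ≤ ∑ i ∈ Finset.range n, (if (i:ℝ)*ε ≤ g x then ε else 0) := h1
        _ = _ := by
            apply Finset.sum_congr rfl
            intro i _
            rw [hind_eq]
      have hmono := integral_mono hg_int
        (integrable_finset_sum (Finset.range n) (fun i _ => hint_ind ((i:ℝ)*ε))) hpt
      have hsum_eq : ∑ i ∈ Finset.range n, ∫ x, (KK ((i:ℝ)*ε)).indicator (fun _ => ε) x ∂μ
          = ∑ i ∈ Finset.range n, ε * m ((i:ℝ)*ε) :=
        Finset.sum_congr rfl (fun i _ => hind_int ((i:ℝ)*ε))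
      rwa [integral_finset_sum (Finset.range n) (fun i _ => hint_ind ((i:ℝ)*ε)),
        hsum_eq] at hmono
    have hInt_lo : ∑ i ∈ Finset.range n, ε * m (((i:ℝ)+1)*ε) ≤ ∫ x, g x ∂μ := by
      have hpt : ∀ x, ∑ i ∈ Finset.range n,
          (KK (((i:ℝ)+1)*ε)).indicator (fun _ => ε) x ≤ g x := by
        intro x
        have h1 := ifsum_le_min hεpos.le (hg0 x) n
        calc ∑ i ∈ Finset.range n, (KK (((i:ℝ)+1)*ε)).indicator (fun _ => ε) x
            = ∑ i ∈ Finset.range n, (if ((i:ℝ)+1)*ε ≤ g x then ε else 0) := by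
              apply Finset.sum_congr rfl
              intro i _
              rw [hind_eq]
        _ ≤ min (g x) ((n:ℝ)*ε) := h1
        _ ≤ g x := min_le_left _ _
      have hmono := integral_mono
        (integrable_finset_sum (Finset.range n) (fun i _ => hint_ind (((i:ℝ)+1)*ε)))
        hg_int hpt
      have hsum_eq : ∑ i ∈ Finset.range n, ∫ x, (KK (((i:ℝ)+1)*ε)).indicator (fun _ => ε) x ∂μ
          = ∑ i ∈ Finset.range n, ε * m (((i:ℝ)+1)*ε) :=
        Finset.sum_congr rfl (fun i _ => hind_int (((i:ℝ)+1)*ε))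
      rwa [integral_finset_sum (Finset.range n) (fun i _ => hint_ind (((i:ℝ)+1)*ε)),
        hsum_eq] at hmono
    -- telescoping bound on widths
    have htel : (∑ i ∈ Finset.range n, ε * m ((i:ℝ)*ε))
        - (∑ i ∈ Finset.range n, ε * m (((i:ℝ)+1)*ε)) ≤ ε := by
      set F : ℕ → ℝ := fun i => ε * m ((i:ℝ)*ε) with hF
      have hcast : ∀ i : ℕ, ε * m (((i:ℝ)+1)*ε) = F (i+1) := by
        intro i
        rw [hF]
        push_cast
        ring_nf
      have hsum_eq : ∑ i ∈ Finset.range n, ε * m (((i:ℝ)+1)*ε)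
          = ∑ i ∈ Finset.range n, F (i+1) :=
        Finset.sum_congr rfl (fun i _ => hcast i)
      rw [hsum_eq, ← Finset.sum_sub_distrib, Finset.sum_range_sub' F n]
      have h1 : F 0 ≤ ε := by
        rw [hF]
        simpa using mul_le_mul_of_nonneg_left (hm_le_one 0) hεpos.le
      have h2 : 0 ≤ F n := mul_nonneg hεpos.le (hm_nonneg _)
      linarith
    rw [hεdef] at *
    apply abs_le.mpr
    constructor <;> linarith
  -- conclude
  by_contra hne
  have habs : 0 < |(∫ x, g x ∂μ) - Λ g| := abs_pos.mpr (sub_ne_zero.mpr hne)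
  obtain ⟨n, hn⟩ := exists_nat_gt (M / |(∫ x, g x ∂μ) - Λ g|)
  have hnpos : 0 < n := by
    by_contra hn0
    push_neg at hn0
    interval_cases n
    simp at hn
    exact absurd hn (not_lt.mpr (by positivity))
  have h1 := key n hnpos
  have h2 : M / n < |(∫ x, g x ∂μ) - Λ g| := by
    rw [div_lt_iff₀ (by exact_mod_cast hnpos)]
    calc M = (M / |(∫ x, g x ∂μ) - Λ g|) * |(∫ x, g x ∂μ) - Λ g| := by field_simp
    _ < n * |(∫ x, g x ∂μ) - Λ g| := by
        apply mul_lt_mul_of_pos_right hn habs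
    _ = |(∫ x, g x ∂μ) - Λ g| * n := by ring
  linarith

include hadd hpos hsmul in
/-- Riesz representation. -/
lemma integral_rieszMeas (hone : Λ 1 = 1) (f : C(A, ℝ)) :
    ∫ x, f x ∂(rieszMeas Λ hadd hpos) = Λ f := by
  classical
  set μ : Measure A := rieszMeas Λ hadd hpos with hμ
  haveI : IsProbabilityMeasure μ := ⟨rieszMeas_univ Λ hadd hpos hsmul hone⟩
  obtain ⟨M0, hM0⟩ := (isCompact_range f.continuous).bddBelow
  set C : ℝ := max (-M0) 0 with hC
  have hfC : ∀ x, 0 ≤ f x + C := by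
    intro x
    have h := hM0 (Set.mem_range_self (f := fun x => f x) x)
    have h1 : -M0 ≤ C := le_max_left _ _
    linarith
  set g : C(A, ℝ) := f + ContinuousMap.const A C with hg
  have hg0 : ∀ x, 0 ≤ g x := fun x => hfC x
  have hrep := integral_rieszMeas_nonneg Λ hadd hpos hsmul hone g hg0
  have hconst : Λ (ContinuousMap.const A C) = C := by
    have h1 : (ContinuousMap.const A C) = C • (1 : C(A, ℝ)) := by
      ext x; simp
    rw [h1, hsmul, hone, mul_one]
  have hΛg : Λ g = Λ f + C := by rw [hg, hadd, hconst]
  have hint : ∫ x, g x ∂μ = (∫ x, f x ∂μ) + C := by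
    have : ∀ x, g x = f x + C := fun x => rfl
    rw [hg]
    have := integral_add (contMap_integrable μ f) (integrable_const (μ := μ) C)
    simpa [measure_univ] using this
  rw [hint, hΛg] at hrep
  linarith

end RMK3
section ProkhorovCompact

open Set MeasureTheory TopologicalSpace Filter
open scoped Topology

variable {A : Type*} [MetricSpace A] [CompactSpace A] [Nonempty A]
  [MeasurableSpace A] [BorelSpace A]

/-- Prokhorov-type compactness: on a compact metric space, the space of Borel probability
measures with the weak topology is compact. -/
theorem probabilityMeasure_compactSpace : CompactSpace (ProbabilityMeasure A) := by
  constructor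
  rw [isCompact_iff_ultrafilter_le_nhds]
  intro 𝒰 _
  -- the limit functional along the ultrafilter
  have hlim : ∀ f : C(A, ℝ), ∃ r : ℝ,
      Tendsto (fun ν : ProbabilityMeasure A => ∫ x, f x ∂(ν : Measure A)) 𝒰 (𝓝 r) := by
    intro f
    set fb := BoundedContinuousFunction.mkOfCompact f with hfb
    have hbound : ∀ ν : ProbabilityMeasure A,
        (∫ x, f x ∂(ν : Measure A)) ∈ Icc (-‖fb‖) ‖fb‖ := by
      intro ν
      have h1 : ‖∫ x, f x ∂(ν : Measure A)‖ ≤ ‖fb‖ * ((ν : Measure A) univ).toReal := by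
        apply norm_integral_le_of_norm_le_const
        apply Filter.Eventually.of_forall
        intro x
        exact fb.norm_coe_le_norm x
      rw [measure_univ, ENNReal.toReal_one, mul_one] at h1
      rw [Real.norm_eq_abs, abs_le] at h1
      exact ⟨h1.1, h1.2⟩
    have hmem : Icc (-‖fb‖) ‖fb‖ ∈
        (𝒰.map (fun ν : ProbabilityMeasure A => ∫ x, f x ∂(ν : Measure A))) := by
      apply Filter.mem_map.mpr
      apply Filter.univ_mem'
      intro ν
      exact hbound ν
    obtain ⟨r, _, hr⟩ := isCompact_Icc.ultrafilter_le_nhds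
      (𝒰.map (fun ν : ProbabilityMeasure A => ∫ x, f x ∂(ν : Measure A)))
      (le_principal_iff.mpr hmem)
    exact ⟨r, hr⟩
  choose Λ hΛ using hlim
  have hadd : ∀ f g, Λ (f + g) = Λ f + Λ g := by
    intro f g
    have t1 : Tendsto (fun ν : ProbabilityMeasure A => ∫ x, (f + g) x ∂(ν : Measure A)) 𝒰
        (𝓝 (Λ f + Λ g)) := by
      apply Tendsto.congr _ ((hΛ f).add (hΛ g))
      intro ν
      have := integral_add (contMap_integrable (ν : Measure A) f)
        (contMap_integrable (ν : Measure A) g)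
      simp only [ContinuousMap.add_apply]
      rw [← this]
    exact (tendsto_nhds_unique (hΛ (f + g)) t1)
  have hsmul : ∀ (r : ℝ) (f : C(A, ℝ)), Λ (r • f) = r * Λ f := by
    intro r f
    have t1 : Tendsto (fun ν : ProbabilityMeasure A => ∫ x, (r • f) x ∂(ν : Measure A)) 𝒰
        (𝓝 (r * Λ f)) := by
      apply Tendsto.congr _ ((hΛ f).const_mul r)
      intro ν
      simp only [ContinuousMap.smul_apply, smul_eq_mul]
      rw [← integral_const_mul]
    exact tendsto_nhds_unique (hΛ (r • f)) t1
  have hpos : ∀ f : C(A, ℝ), (∀ x, 0 ≤ f x) → 0 ≤ Λ f := by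
    intro f hf
    apply ge_of_tendsto (hΛ f)
    apply Filter.Eventually.of_forall
    intro ν
    exact integral_nonneg (fun x => hf x)
  have hone : Λ 1 = 1 := by
    have t1 : Tendsto (fun ν : ProbabilityMeasure A => ∫ x, (1 : C(A, ℝ)) x ∂(ν : Measure A)) 𝒰
        (𝓝 1) := by
      apply Tendsto.congr _ tendsto_const_nhds
      intro ν
      simp
    exact tendsto_nhds_unique (hΛ 1) t1
  haveI hPM : IsProbabilityMeasure (rieszMeas Λ hadd hpos) :=
    ⟨rieszMeas_univ Λ hadd hpos hsmul hone⟩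
  set P : ProbabilityMeasure A := ⟨rieszMeas Λ hadd hpos, hPM⟩ with hP
  refine ⟨P, ?_⟩
  have htendsto : Tendsto (id : ProbabilityMeasure A → ProbabilityMeasure A) 𝒰 (𝓝 P) := by
    rw [MeasureTheory.ProbabilityMeasure.tendsto_iff_forall_integral_tendsto]
    intro f
    have h2 : ∫ x, f x ∂(P : Measure A) = Λ f.toContinuousMap :=
      integral_rieszMeas Λ hadd hpos hsmul hone f.toContinuousMap
    rw [h2]
    exact hΛ f.toContinuousMap
  simpa [Filter.Tendsto, Filter.map_id] using htendsto

end ProkhorovCompact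
section Application

open Set MeasureTheory TopologicalSpace Filter
open scoped Topology ENNReal NNReal

lemma cont_integrable' {X : Type*} [MetricSpace X] [CompactSpace X]
    [MeasurableSpace X] [BorelSpace X] (μ : Measure X) [IsFiniteMeasure μ]
    {φ : X → ℝ} (hφ : Continuous φ) : Integrable φ μ :=
  hφ.integrable_of_hasCompactSupport (isClosed_tsupport _).isCompact

/-- Convex combination of two probability measures (junk value `μ1` outside `[0,1]`). -/
noncomputable def mixPM {X : Type*} [MeasurableSpace X]
    (t : ℝ) (μ1 μ2 : ProbabilityMeasure X) : ProbabilityMeasure X :=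
  if h : 0 ≤ t ∧ t ≤ 1 then
    ⟨(ENNReal.ofReal (1 - t)) • (μ1 : Measure X) + (ENNReal.ofReal t) • (μ2 : Measure X), by
      constructor
      rw [Measure.add_apply, Measure.smul_apply, Measure.smul_apply, measure_univ, measure_univ,
        smul_eq_mul, smul_eq_mul, mul_one, mul_one,
        ← ENNReal.ofReal_add (by linarith [h.2]) h.1]
      norm_num⟩
  else μ1

lemma integral_mixPM {X : Type*} [MeasurableSpace X]
    {t : ℝ} (h0 : 0 ≤ t) (h1 : t ≤ 1) (μ1 μ2 : ProbabilityMeasure X) (φ : X → ℝ)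
    (hφ1 : Integrable φ (μ1 : Measure X)) (hφ2 : Integrable φ (μ2 : Measure X)) :
    ∫ x, φ x ∂(mixPM t μ1 μ2 : Measure X)
      = (1 - t) * ∫ x, φ x ∂(μ1 : Measure X) + t * ∫ x, φ x ∂(μ2 : Measure X) := by
  have hco : (mixPM t μ1 μ2 : Measure X)
      = (ENNReal.ofReal (1 - t)) • (μ1 : Measure X) + (ENNReal.ofReal t) • (μ2 : Measure X) := by
    unfold mixPM
    simp [h0, h1]

  rw [hco, integral_add_measure (hφ1.smul_measure ENNReal.ofReal_ne_top)
    (hφ2.smul_measure ENNReal.ofReal_ne_top), integral_smul_measure, integral_smul_measure,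
    ENNReal.toReal_ofReal (by linarith), ENNReal.toReal_ofReal h0, smul_eq_mul, smul_eq_mul]

variable {A B : Type*}
  [MetricSpace A] [CompactSpace A] [Nonempty A] [MeasurableSpace A] [BorelSpace A]
  [MetricSpace B] [CompactSpace B] [Nonempty B] [MeasurableSpace B] [BorelSpace B]

lemma innerInt_continuous (c : A × B → ℝ) (hc : Continuous c) (ν : Measure B)
    [IsProbabilityMeasure ν] : Continuous (fun a => ∫ b, c (a, b) ∂ν) := by
  have hu : UniformContinuous c := CompactSpace.uniformContinuous_of_continuous hc
  rw [Metric.uniformContinuous_iff] at hu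
  rw [Metric.continuous_iff]
  intro a ε hε
  obtain ⟨δ, hδ, hδ'⟩ := hu (ε/2) (half_pos hε)
  refine ⟨δ, hδ, fun a' ha' => ?_⟩
  have hint : ∀ a0 : A, Integrable (fun b => c (a0, b)) ν :=
    fun a0 => cont_integrable' ν (hc.comp (Continuous.prodMk_right a0))
  rw [Real.dist_eq, ← integral_sub (hint a') (hint a)]
  have hnorm : ‖∫ b, (c (a', b) - c (a, b)) ∂ν‖ ≤ (ε/2) * (ν univ).toReal := by
    apply norm_integral_le_of_norm_le_const
    apply Filter.Eventually.of_forall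
    intro b
    have hd : dist ((a', b) : A × B) ((a, b) : A × B) < δ := by
      rw [Prod.dist_eq]
      simp only [dist_self]
      rw [max_eq_left dist_nonneg]
      exact ha'
    have h2 := (hδ' hd).le
    rw [Real.dist_eq] at h2
    rw [Real.norm_eq_abs]
    exact h2
  calc |∫ b, (c (a', b) - c (a, b)) ∂ν|
      = ‖∫ b, (c (a', b) - c (a, b)) ∂ν‖ := (Real.norm_eq_abs _).symm
  _ ≤ (ε/2) * (ν univ).toReal := hnorm
  _ = ε/2 := by simp [measure_univ]
  _ < ε := by linarith

/-- The mixed extension of the payoff. -/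
noncomputable def mixedF (c : A × B → ℝ)
    (μ : ProbabilityMeasure A) (ν : ProbabilityMeasure B) : ℝ :=
  ∫ a, ∫ b, c (a, b) ∂(ν : Measure B) ∂(μ : Measure A)

lemma mixedF_swap (c : A × B → ℝ) (hc : Continuous c)
    (μ : ProbabilityMeasure A) (ν : ProbabilityMeasure B) :
    mixedF c μ ν = ∫ b, ∫ a, c (a, b) ∂(μ : Measure A) ∂(ν : Measure B) := by
  apply MeasureTheory.integral_integral_swap
  exact cont_integrable' _ (by exact hc)

lemma mixedF_continuous_left (c : A × B → ℝ) (hc : Continuous c) (ν : ProbabilityMeasure B) :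
    Continuous (fun μ : ProbabilityMeasure A => mixedF c μ ν) := by
  set g : BoundedContinuousFunction A ℝ := BoundedContinuousFunction.mkOfCompact
    ⟨fun a => ∫ b, c (a, b) ∂(ν : Measure B), innerInt_continuous c hc _⟩ with hgdef
  have := MeasureTheory.ProbabilityMeasure.continuous_integral_boundedContinuousFunction
    (X := A) g
  convert this using 2 with μ
  rfl

lemma mixedF_continuous_right (c : A × B → ℝ) (hc : Continuous c) (μ : ProbabilityMeasure A) :
    Continuous (fun ν : ProbabilityMeasure B => mixedF c μ ν) := by
  have hswap : (fun ν : ProbabilityMeasure B => mixedF c μ ν)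
      = fun ν : ProbabilityMeasure B =>
        ∫ b, ∫ a, c (a, b) ∂(μ : Measure A) ∂(ν : Measure B) := by
    funext ν
    exact mixedF_swap c hc μ ν
  rw [hswap]
  have hcsw : Continuous (fun p : B × A => c (p.2, p.1)) :=
    hc.comp (continuous_snd.prodMk continuous_fst)
  set g : BoundedContinuousFunction B ℝ := BoundedContinuousFunction.mkOfCompact
    ⟨fun b => ∫ a, c (a, b) ∂(μ : Measure A),
      innerInt_continuous (fun p : B × A => c (p.2, p.1)) hcsw (μ : Measure A)⟩ with hgdef
  have := MeasureTheory.ProbabilityMeasure.continuous_integral_boundedContinuousFunction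
    (X := B) g
  convert this using 2 with ν
  rfl

lemma mixedF_affine_left (c : A × B → ℝ) (hc : Continuous c)
    {t : ℝ} (h0 : 0 ≤ t) (h1 : t ≤ 1) (μ1 μ2 : ProbabilityMeasure A)
    (ν : ProbabilityMeasure B) :
    mixedF c (mixPM t μ1 μ2) ν = (1 - t) * mixedF c μ1 ν + t * mixedF c μ2 ν := by
  apply integral_mixPM h0 h1 μ1 μ2 _
    (cont_integrable' _ (innerInt_continuous c hc _))
    (cont_integrable' _ (innerInt_continuous c hc _))

lemma mixedF_affine_right (c : A × B → ℝ) (hc : Continuous c)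
    {t : ℝ} (h0 : 0 ≤ t) (h1 : t ≤ 1) (μ : ProbabilityMeasure A)
    (ν1 ν2 : ProbabilityMeasure B) :
    mixedF c μ (mixPM t ν1 ν2) = (1 - t) * mixedF c μ ν1 + t * mixedF c μ ν2 := by
  have hint : ∀ a, Integrable (fun b => c (a, b)) (ν1 : Measure B) ∧
      Integrable (fun b => c (a, b)) (ν2 : Measure B) := by
    intro a
    constructor <;> exact cont_integrable' _ (hc.comp (Continuous.prodMk_right a))
  have hpt : ∀ a, ∫ b, c (a, b) ∂(mixPM t ν1 ν2 : Measure B)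
      = (1 - t) * ∫ b, c (a, b) ∂(ν1 : Measure B) + t * ∫ b, c (a, b) ∂(ν2 : Measure B) :=
    fun a => integral_mixPM h0 h1 ν1 ν2 _ (hint a).1 (hint a).2
  rw [mixedF]
  rw [integral_congr_ae (Filter.Eventually.of_forall hpt)]
  have hi1 : Integrable (fun a => (1 - t) * ∫ b, c (a, b) ∂(ν1 : Measure B)) (μ : Measure A) :=
    (cont_integrable' _ (innerInt_continuous c hc _)).const_mul _
  have hi2 : Integrable (fun a => t * ∫ b, c (a, b) ∂(ν2 : Measure B)) (μ : Measure A) :=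
    (cont_integrable' _ (innerInt_continuous c hc _)).const_mul _
  rw [integral_add hi1 hi2, integral_const_mul, integral_const_mul]
  rfl

end Application

open MeasureTheory

/-- Existence of a saddle point of the mixed extension of a continuous payoff on
compact metric spaces. -/
theorem mixed_extension_saddle_point
    {A B : Type*}
    [MetricSpace A] [CompactSpace A] [Nonempty A] [MeasurableSpace A] [BorelSpace A]
    [MetricSpace B] [CompactSpace B] [Nonempty B] [MeasurableSpace B] [BorelSpace B]
    (c : A × B → ℝ) (hc : Continuous c) :
    ∃ (μstar : ProbabilityMeasure A) (νstar : ProbabilityMeasure B),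
      ∀ (μ : ProbabilityMeasure A) (ν : ProbabilityMeasure B),
        (∫ a, ∫ b, c (a, b) ∂(νstar : Measure B) ∂(μ : Measure A)) ≤
            (∫ a, ∫ b, c (a, b) ∂(νstar : Measure B) ∂(μstar : Measure A)) ∧
          (∫ a, ∫ b, c (a, b) ∂(νstar : Measure B) ∂(μstar : Measure A)) ≤
            (∫ a, ∫ b, c (a, b) ∂(ν : Measure B) ∂(μstar : Measure A)) := by
  haveI : CompactSpace (ProbabilityMeasure A) := probabilityMeasure_compactSpace
  haveI : CompactSpace (ProbabilityMeasure B) := probabilityMeasure_compactSpace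
  haveI : Nonempty (ProbabilityMeasure A) :=
    ⟨⟨Measure.dirac Classical.ofNonempty, by infer_instance⟩⟩
  haveI : Nonempty (ProbabilityMeasure B) :=
    ⟨⟨Measure.dirac Classical.ofNonempty, by infer_instance⟩⟩
  obtain ⟨μs, νs, h⟩ := komiya_saddle (fun μ ν => mixedF c μ ν) mixPM mixPM
    (fun ν => mixedF_continuous_left c hc ν)
    (fun μ => mixedF_continuous_right c hc μ)
    (fun t h0 h1 μ1 μ2 ν => mixedF_affine_left c hc h0 h1 μ1 μ2 ν)
    (fun t h0 h1 μ ν1 ν2 => mixedF_affine_right c hc h0 h1 μ ν1 ν2)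
  exact ⟨μs, νs, fun μ ν => ⟨(h μ ν).1, (h μ ν).2⟩⟩
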